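/- For every inner function u and every f ∈ C(𝕋), the Hankel-type operator H_f^u : K_u → L², H_f^u g = (I − P_u)(f·g), is compact. -/

import Mathlib

noncomputable section

open MeasureTheory Complex Filter Topology Set ContinuousLinearMap
open scoped ENNReal NNReal ComplexConjugate

set_option maxHeartbeats 1000000
set_option synthInstance.maxHeartbeats 1000000

namespace TTOPaper

instance fact2pi : Fact (0 < 2 * Real.pi) := ⟨by positivity⟩

/-- The circle, modelled additively as `ℝ / 2πℤ`. -/
abbrev T2π : Type := AddCircle (2 * Real.pi)

/-- Normalized arc-length (Haar) measure on the circle. -/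
abbrev μ : Measure T2π := AddCircle.haarAddCircle

/-- `L²(𝕋)`. -/
abbrev Ltwo := Lp ℂ 2 μ

/-- The identity function `z ↦ z` on the circle, i.e. `θ ↦ e^{iθ}`. -/
def zfun : T2π → ℂ := fun θ => (AddCircle.toCircle θ : ℂ)

lemma continuous_zfun : Continuous zfun :=
  continuous_subtype_val.comp AddCircle.continuous_toCircle

/-- A continuous function on the (compact) circle is essentially bounded. -/
lemma memLinfty_of_continuous {f : T2π → ℂ} (hf : Continuous f) : MemLp f ⊤ μ :=
  hf.memLp_top_of_hasCompactSupport
    (IsCompact.of_isClosed_subset isCompact_univ (isClosed_tsupport f) (Set.subset_univ _)) μ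

lemma memLinfty_contMap (φ : C(T2π, ℂ)) : MemLp (⇑φ) ⊤ μ :=
  memLinfty_of_continuous φ.continuous

lemma memLinfty_zfun : MemLp zfun ⊤ μ := memLinfty_of_continuous continuous_zfun

/-- Pointwise product of two essentially bounded functions is essentially bounded. -/
lemma memLinfty_mul {φ ψ : T2π → ℂ} (hφ : MemLp φ ⊤ μ) (hψ : MemLp ψ ⊤ μ) :
    MemLp (fun θ => φ θ * ψ θ) ⊤ μ := by
  have h : MemLp (φ • ψ) ⊤ μ := MemLp.smul (r := ⊤) hψ hφ
  exact h.congr_norm (hφ.1.mul hψ.1) (Filter.Eventually.of_forall fun θ => by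
    simp [Pi.smul_apply', smul_eq_mul])

/-- Complex conjugate of an essentially bounded function is essentially bounded. -/
lemma memLinfty_conj {f : T2π → ℂ} (hf : MemLp f ⊤ μ) :
    MemLp (fun θ => (starRingEnd ℂ) (f θ)) ⊤ μ :=
  hf.congr_norm (Complex.continuous_conj.comp_aestronglyMeasurable hf.1)
    (Filter.Eventually.of_forall fun θ => by simp)

/-- Multiplication operator `M_φ : L² → L²` by an essentially bounded symbol `φ`. -/
def mulCLM (φ : T2π → ℂ) (hφ : MemLp φ ⊤ μ) : Ltwo →L[ℂ] Ltwo :=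
  LinearMap.mkContinuous
    { toFun := fun f => MemLp.toLp (φ • (⇑f : T2π → ℂ)) ((Lp.memLp f).smul (r := 2) hφ)
      map_add' := fun f g => by
        have h1 : (φ • (⇑(f + g) : T2π → ℂ)) =ᵐ[μ]
            (φ • (⇑f : T2π → ℂ)) + (φ • (⇑g : T2π → ℂ)) := by
          filter_upwards [Lp.coeFn_add f g] with x hx
          simp only [Pi.smul_apply', Pi.add_apply, hx, smul_add]
        exact (MemLp.toLp_congr _ (((Lp.memLp f).smul (r := 2) hφ).add
          ((Lp.memLp g).smul (r := 2) hφ)) h1).trans (MemLp.toLp_add _ _)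
      map_smul' := fun c f => by
        have h1 : (φ • (⇑(c • f) : T2π → ℂ)) =ᵐ[μ] c • (φ • (⇑f : T2π → ℂ)) := by
          filter_upwards [Lp.coeFn_smul c f] with x hx
          simp only [Pi.smul_apply', hx, Pi.smul_apply, smul_comm c]
        show MemLp.toLp (φ • (⇑(c • f) : T2π → ℂ)) ((Lp.memLp (c • f)).smul (r := 2) hφ)
            = c • MemLp.toLp (φ • (⇑f : T2π → ℂ)) ((Lp.memLp f).smul (r := 2) hφ)
        rw [MemLp.toLp_congr ((Lp.memLp (c • f)).smul (r := 2) hφ)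
          (((Lp.memLp f).smul (r := 2) hφ).const_smul c) h1, MemLp.toLp_const_smul] }
    (eLpNorm φ ⊤ μ).toReal
    (fun f => by
      simp only [LinearMap.coe_mk, AddHom.coe_mk]
      rw [Lp.norm_toLp, Lp.norm_def, ← ENNReal.toReal_mul]
      exact ENNReal.toReal_mono (ENNReal.mul_ne_top hφ.eLpNorm_ne_top (Lp.eLpNorm_ne_top f))
        (eLpNorm_smul_le_eLpNorm_top_mul_eLpNorm 2 (Lp.aestronglyMeasurable f) φ))

/-- The Hardy space `H²`, as the subspace of `L²` of functions whose Fourier coefficients of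
negative index all vanish. -/
def H2 : Submodule ℂ Ltwo where
  carrier := {f : Ltwo | ∀ n : ℤ, n < 0 → fourierCoeff (⇑f) n = 0}
  add_mem' := by
    intro f g hf hg n hn
    have hf' := hf n hn
    have hg' := hg n hn
    rw [← fourierBasis_repr] at hf' hg' ⊢
    rw [map_add, lp.coeFn_add, Pi.add_apply, hf', hg', add_zero]
  zero_mem' := by
    intro n hn
    rw [← fourierBasis_repr, map_zero]
    simp
  smul_mem' := by
    intro c f hf n hn
    have hf' := hf n hn
    rw [← fourierBasis_repr] at hf' ⊢
    rw [_root_.map_smul, lp.coeFn_smul, Pi.smul_apply, hf', smul_zero]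

lemma isClosed_H2 : IsClosed (H2 : Set Ltwo) := by
  have h : (H2 : Set Ltwo) =
      ⋂ (n : ℤ) (_ : n < 0), {f : Ltwo | (fourierBasis.repr f : ℤ → ℂ) n = 0} := by
    ext f
    simp only [Set.mem_iInter, Set.mem_setOf_eq]
    constructor
    · intro hf n hn; rw [fourierBasis_repr]; exact hf n hn
    · intro hf n hn; rw [← fourierBasis_repr]; exact hf n hn
  rw [h]
  refine isClosed_iInter fun n => isClosed_iInter fun _ => ?_
  have h1 : Continuous fun x : lp (fun _ : ℤ => ℂ) 2 => (x : ℤ → ℂ) n :=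
    (continuous_apply n).comp lp.uniformContinuous_coe.continuous
  exact isClosed_eq (h1.comp fourierBasis.repr.continuous) continuous_const
/-- An inner function: a nonconstant bounded function in `H²` which is unimodular a.e. -/
structure IsInner (u : T2π → ℂ) : Prop where
  meas : AEStronglyMeasurable u μ
  unimodular : ∀ᵐ θ ∂μ, ‖u θ‖ = 1
  negCoeff : ∀ n : ℤ, n < 0 → fourierCoeff u n = 0
  nonconst : ¬ ∃ c : ℂ, u =ᵐ[μ] fun _ => c

lemma IsInner.memLinfty {u : T2π → ℂ} (hu : IsInner u) : MemLp u ⊤ μ :=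
  memLp_top_of_bound hu.meas 1 (hu.unimodular.mono fun θ h => by
    rw [h])

/-- The holomorphic extension of a function on the circle to the open unit disk, via the
power series whose coefficients are the Fourier coefficients of nonnegative index. -/
def extD (u : T2π → ℂ) (z : ℂ) : ℂ := ∑' n : ℕ, fourierCoeff u (n : ℤ) * z ^ n

/-- The spectrum `σ(u)` of an inner function `u`: the set of `λ` in the closed unit disk where
`liminf_{z → λ, z ∈ 𝔻} |u(z)| = 0`. -/
def specU (u : T2π → ℂ) : Set ℂ :=
  {l | l ∈ Metric.closedBall (0 : ℂ) 1 ∧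
    Filter.liminf (fun z => ‖extD u z‖) (nhdsWithin l (Metric.ball (0 : ℂ) 1)) = 0}

/-- `σ(u) ∩ 𝕋`, viewed as a subset of the additive circle. -/
def specT (u : T2π → ℂ) : Set T2π := {θ : T2π | zfun θ ∈ specU u}

/-- The model space `K_u = H² ⊖ uH²`. -/
def KuSub (u : T2π → ℂ) (hu : IsInner u) : Submodule ℂ Ltwo :=
  H2 ⊓ (Submodule.map (mulCLM u hu.memLinfty).toLinearMap H2)ᗮ

lemma isClosed_KuSub (u : T2π → ℂ) (hu : IsInner u) : IsClosed ((KuSub u hu : Set Ltwo)) := by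
  have h : (KuSub u hu : Set Ltwo) = (H2 : Set Ltwo) ∩
      ((Submodule.map (mulCLM u hu.memLinfty).toLinearMap H2)ᗮ : Set Ltwo) := rfl
  rw [h]
  exact isClosed_H2.inter (Submodule.isClosed_orthogonal _)

instance (u : T2π → ℂ) (hu : IsInner u) : CompleteSpace (KuSub u hu) :=
  (isClosed_KuSub u hu).completeSpace_coe

attribute [irreducible] H2 KuSub mulCLM

instance KuNormedAddCommGroup (u : T2π → ℂ) (hu : IsInner u) :
    NormedAddCommGroup (KuSub u hu) := Submodule.normedAddCommGroup _

instance KuInnerProductSpace (u : T2π → ℂ) (hu : IsInner u) :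
    InnerProductSpace ℂ (KuSub u hu) := Submodule.innerProductSpace _

instance KuNormedSpace (u : T2π → ℂ) (hu : IsInner u) :
    NormedSpace ℂ (KuSub u hu) := by infer_instance

instance KuContinuousStar (u : T2π → ℂ) (hu : IsInner u) :
    ContinuousStar (KuSub u hu →L[ℂ] KuSub u hu) :=
  ⟨(ContinuousLinearMap.adjoint (𝕜 := ℂ) (E := KuSub u hu) (F := KuSub u hu)).continuous⟩

/-- The truncated Toeplitz operator `A_φ^u = P_u M_φ |_{K_u}` on the model space `K_u`. -/
def TTOp (u : T2π → ℂ) (hu : IsInner u) (φ : T2π → ℂ) (hφ : MemLp φ ⊤ μ) :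
    KuSub u hu →L[ℂ] KuSub u hu :=
  ((KuSub u hu).orthogonalProjectionOnto) ∘L (mulCLM φ hφ) ∘L (KuSub u hu).subtypeL

/-- The compressed shift `A_z^u`. -/
def Az (u : T2π → ℂ) (hu : IsInner u) : KuSub u hu →L[ℂ] KuSub u hu :=
  TTOp u hu zfun memLinfty_zfun

/-- The unital C*-algebra generated by the compressed shift. -/
def CstarAz (u : T2π → ℂ) (hu : IsInner u) :
    StarSubalgebra ℂ (KuSub u hu →L[ℂ] KuSub u hu) :=
  StarAlgebra.elemental ℂ (Az u hu)

/-- The commutator ideal of a C*-algebra of operators, i.e. the smallest closed two-sided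
ideal containing all commutators: the closure of the two-sided ideal generated by the
commutators.  Realized here as a subset of the ambient algebra of bounded operators. -/
def commutatorIdealSet {u : T2π → ℂ} {hu : IsInner u}
    (S : StarSubalgebra ℂ (KuSub u hu →L[ℂ] KuSub u hu)) :
    Set (KuSub u hu →L[ℂ] KuSub u hu) :=
  Subtype.val '' (closure
    ((TwoSidedIdeal.span {x : S | ∃ a b : S, x = a * b - b * a} : TwoSidedIdeal S) : Set S))

/-- The essential spectrum of an operator on `K_u`: the spectrum of its image in the Calkin
algebra, i.e. the set of `z` such that `z - T` is not invertible modulo the compacts. -/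
def essSpectrum {u : T2π → ℂ} {hu : IsInner u} (T : KuSub u hu →L[ℂ] KuSub u hu) : Set ℂ :=
  {z : ℂ | ¬ ∃ S : KuSub u hu →L[ℂ] KuSub u hu,
    IsCompactOperator (⇑(S * (z • (1 : KuSub u hu →L[ℂ] KuSub u hu) - T) - 1)) ∧
    IsCompactOperator (⇑((z • (1 : KuSub u hu →L[ℂ] KuSub u hu) - T) * S - 1))}

/-- The essential norm of an operator on `K_u`: the norm of its image in the Calkin algebra,
i.e. the distance to the ideal of compact operators. -/
def essNorm {u : T2π → ℂ} {hu : IsInner u} (T : KuSub u hu →L[ℂ] KuSub u hu) : ℝ :=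
  sInf {c : ℝ | ∃ K : KuSub u hu →L[ℂ] KuSub u hu, IsCompactOperator (⇑K) ∧ c = ‖T - K‖}


/-! ### Piecewise continuous symbols -/

/-- `φ` has one-sided limits `Lp` (from above) and `Lm` (from below) at the point `ζ` of the
circle, computed in terms of any lift of `ζ` to `ℝ`. -/
def HasOneSidedLimits (φ : T2π → ℂ) (ζ : T2π) (Lp Lm : ℂ) : Prop :=
  ∀ x : ℝ, (x : T2π) = ζ →
    Filter.Tendsto (fun t : ℝ => φ (t : T2π)) (nhdsWithin x (Set.Ioi x)) (nhds Lp) ∧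
    Filter.Tendsto (fun t : ℝ => φ (t : T2π)) (nhdsWithin x (Set.Iio x)) (nhds Lm)

/-- A piecewise continuous function on the circle: continuous off a finite set, with one-sided
limits at each of the exceptional points. -/
def PiecewiseContinuous (φ : T2π → ℂ) : Prop :=
  ∃ F : Finset T2π, ContinuousOn φ ((↑F : Set T2π)ᶜ) ∧
    ∀ ζ ∈ F, ∃ Lp Lm : ℂ, HasOneSidedLimits φ ζ Lp Lm

/-- The function `χ(e^{iθ}) = 1 - θ/(2π)`, `0 ≤ θ < 2π`. -/
def chiFun : T2π → ℂ :=
  fun ζ => 1 - ((((AddCircle.measurableEquivIco (T := 2 * Real.pi) 0 ζ : ℝ) / (2 * Real.pi)) : ℝ) : ℂ)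

lemma memLinfty_chiFun : MemLp chiFun ⊤ μ := by
  have hmeas : Measurable chiFun := by
    have h1 : Measurable fun ζ : T2π => (AddCircle.measurableEquivIco (T := 2 * Real.pi) 0 ζ : ℝ) :=
      measurable_subtype_coe.comp (AddCircle.measurableEquivIco (T := 2 * Real.pi) 0).measurable
    exact (Complex.measurable_ofReal.comp (h1.div_const _)).const_sub 1
  refine memLp_top_of_bound hmeas.aestronglyMeasurable 1 (Filter.Eventually.of_forall fun ζ => ?_)
  set r : ℝ := (AddCircle.measurableEquivIco (T := 2 * Real.pi) 0 ζ : ℝ) with hr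
  have hmem : r ∈ Set.Ico (0 : ℝ) (0 + 2 * Real.pi) :=
    (AddCircle.measurableEquivIco (T := 2 * Real.pi) 0 ζ).2
  have h2π : (0 : ℝ) < 2 * Real.pi := fact2pi.out
  have h0 : 0 ≤ r / (2 * Real.pi) := div_nonneg hmem.1 h2π.le
  have h1' : r / (2 * Real.pi) < 1 := by
    rw [div_lt_one h2π]
    simpa using hmem.2
  have : chiFun ζ = (((1 : ℝ) - r / (2 * Real.pi) : ℝ) : ℂ) := by
    simp [chiFun, hr]
  rw [this, Complex.norm_real, Real.norm_eq_abs, abs_le]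
  constructor <;> nlinarith

/-! ### Ingredients for Clark's unitary perturbations -/

/-- The value `u(0)` of the holomorphic extension of `u` at the origin. -/
def u0 (u : T2π → ℂ) : ℂ := extD u 0

/-- The reproducing kernel `k₀ = 1 - conj(u(0))·u` at the origin, as a function. -/
def k0fun (u : T2π → ℂ) : T2π → ℂ := fun θ => 1 - (starRingEnd ℂ) (u0 u) * u θ

lemma memLinfty_k0fun {u : T2π → ℂ} (hu : IsInner u) : MemLp (k0fun u) ⊤ μ := by
  have hmeas : AEStronglyMeasurable (k0fun u) μ :=
    aestronglyMeasurable_const.sub (hu.meas.const_mul _)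
  refine memLp_top_of_bound hmeas (1 + ‖u0 u‖) ?_
  filter_upwards [hu.unimodular] with θ hθ
  calc ‖1 - (starRingEnd ℂ) (u0 u) * u θ‖
      ≤ ‖(1 : ℂ)‖ + ‖(starRingEnd ℂ) (u0 u) * u θ‖ := norm_sub_le _ _
    _ ≤ 1 + ‖u0 u‖ := by
        rw [norm_mul]
        simp only [norm_one]
        rw [Complex.norm_conj, hθ, mul_one]

/-- `Cf(ζ) = u(ζ) ζ̄ conj(f(ζ))`, applied to `k₀`, as a function. -/
def Ck0fun (u : T2π → ℂ) : T2π → ℂ :=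
  fun θ => u θ * (starRingEnd ℂ) (zfun θ) * (starRingEnd ℂ) (k0fun u θ)

lemma memLinfty_Ck0fun {u : T2π → ℂ} (hu : IsInner u) : MemLp (Ck0fun u) ⊤ μ :=
  memLinfty_mul (memLinfty_mul hu.memLinfty (memLinfty_conj memLinfty_zfun))
    (memLinfty_conj (memLinfty_k0fun hu))

/-- `k₀` as an element of the model space (it indeed lies in `K_u`, so that projecting the
corresponding `L²`-function onto `K_u` does not change it). -/
def k0 (u : T2π → ℂ) (hu : IsInner u) : KuSub u hu :=
  (KuSub u hu).orthogonalProjectionOnto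
    (MemLp.toLp (k0fun u) ((memLinfty_k0fun hu).mono_exponent le_top))

/-- `Ck₀` as an element of the model space. -/
def Ck0 (u : T2π → ℂ) (hu : IsInner u) : KuSub u hu :=
  (KuSub u hu).orthogonalProjectionOnto
    (MemLp.toLp (Ck0fun u) ((memLinfty_Ck0fun hu).mono_exponent le_top))

/-- The rank-one operator `k₀ ⊗ Ck₀ : f ↦ ⟨f, Ck₀⟩ k₀` (the inner product being that of `L²`,
conjugate-linear in `Ck₀`). -/
def rankOneClark (u : T2π → ℂ) (hu : IsInner u) : KuSub u hu →L[ℂ] KuSub u hu :=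
  (innerSL ℂ (Ck0 u hu)).smulRight (k0 u hu)

/-- The Clark perturbation `U_α = A_z^u + (α/(1 - conj(u(0))α)) k₀ ⊗ Ck₀`. -/
def clarkU (u : T2π → ℂ) (hu : IsInner u) (α : ℂ) : KuSub u hu →L[ℂ] KuSub u hu :=
  Az u hu + (α / (1 - (starRingEnd ℂ) (u0 u) * α)) • rankOneClark u hu

/-! ### Complex symmetric operators -/

/-- A conjugation: a conjugate-linear isometric involution. -/
structure IsConjugation {E : Type*} [NormedAddCommGroup E] [InnerProductSpace ℂ E]
    (J : E → E) : Prop where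
  map_add : ∀ x y, J (x + y) = J x + J y
  map_smul : ∀ (c : ℂ) (x), J (c • x) = (starRingEnd ℂ) c • J x
  involutive : ∀ x, J (J x) = x
  inner_map : ∀ x y, (inner ℂ (J x) (J y) : ℂ) = (inner ℂ y x : ℂ)

/-- The block operator matrix `[[0, A], [0, 0]]` on `H ⊕ H` (with the `ℓ²` direct sum norm). -/
def blockOp {H : Type*} [NormedAddCommGroup H] [InnerProductSpace ℂ H] (A : H →L[ℂ] H) :
    WithLp 2 (H × H) →L[ℂ] WithLp 2 (H × H) :=
  (((WithLp.prodContinuousLinearEquiv 2 ℂ H H).symm : (H × H) →L[ℂ] WithLp 2 (H × H)) ∘L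
    ((A.comp (ContinuousLinearMap.snd ℂ H H)).prod 0)) ∘L
    ((WithLp.prodContinuousLinearEquiv 2 ℂ H H) : WithLp 2 (H × H) →L[ℂ] (H × H))


/-! ### The unilateral shift and direct sums -/

/-- `ℓ²(ℕ)`. -/
abbrev ellTwo := lp (fun _ : ℕ => ℂ) 2

/-- The underlying function of the unilateral shift: `(x₀, x₁, …) ↦ (0, x₀, x₁, …)`. -/
def shiftFun (x : ℕ → ℂ) : ℕ → ℂ := fun n => if n = 0 then 0 else x (n - 1)

lemma memℓp_shiftFun (x : ellTwo) : Memℓp (shiftFun (⇑x)) 2 := by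
  apply memℓp_gen
  have hs : Summable fun n : ℕ => ‖x n‖ ^ (2 : ℝ≥0∞).toReal :=
    (lp.memℓp x).summable (by norm_num)
  refine (summable_nat_add_iff 1).mp ?_
  have h : (fun n : ℕ => ‖shiftFun (⇑x) (n + 1)‖ ^ (2 : ℝ≥0∞).toReal)
      = fun n : ℕ => ‖x n‖ ^ (2 : ℝ≥0∞).toReal := by
    funext n; simp [shiftFun]
  rw [h]; exact hs

lemma tsum_shiftFun (x : ellTwo) :
    ∑' n : ℕ, ‖(⟨shiftFun (⇑x), memℓp_shiftFun x⟩ : ellTwo) n‖ ^ (2 : ℝ≥0∞).toReal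
      = ∑' n : ℕ, ‖x n‖ ^ (2 : ℝ≥0∞).toReal := by
  show ∑' n : ℕ, ‖shiftFun (⇑x) n‖ ^ (2 : ℝ≥0∞).toReal = _
  rw [Summable.tsum_eq_zero_add ((memℓp_shiftFun x).summable (by norm_num))]
  have h0 : ‖shiftFun (⇑x) 0‖ ^ (2 : ℝ≥0∞).toReal = 0 := by
    simp [shiftFun, Real.zero_rpow (by norm_num : (2 : ℝ≥0∞).toReal ≠ 0)]
  have h : (fun n : ℕ => ‖shiftFun (⇑x) (n + 1)‖ ^ (2 : ℝ≥0∞).toReal)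
      = fun n : ℕ => ‖x n‖ ^ (2 : ℝ≥0∞).toReal := by
    funext n; simp [shiftFun]
  rw [h0, h, zero_add]

/-- The unilateral shift `S` on `ℓ²(ℕ)`. -/
def shiftS : ellTwo →L[ℂ] ellTwo :=
  LinearMap.mkContinuous
    { toFun := fun x => (⟨shiftFun (⇑x), memℓp_shiftFun x⟩ : ellTwo)
      map_add' := fun x y => by
        apply Subtype.ext
        funext n
        have h1 : (x + y : ellTwo) n = x n + y n := by rw [lp.coeFn_add]; rfl
        show shiftFun (⇑(x + y)) n = shiftFun (⇑x) n + shiftFun (⇑y) n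
        by_cases h : n = 0 <;> simp [shiftFun, h, h1]
      map_smul' := fun c x => by
        apply Subtype.ext
        funext n
        have h1 : (c • x : ellTwo) n = c • x n := by rw [lp.coeFn_smul]; rfl
        show shiftFun (⇑(c • x)) n = c • shiftFun (⇑x) n
        by_cases h : n = 0 <;> simp [shiftFun, h, h1] }
    1
    (fun x => by
      have h2 : (0 : ℝ) < (2 : ℝ≥0∞).toReal := by norm_num
      show ‖(⟨shiftFun (⇑x), memℓp_shiftFun x⟩ : ellTwo)‖ ≤ 1 * ‖x‖
      rw [one_mul, lp.norm_eq_tsum_rpow h2, lp.norm_eq_tsum_rpow h2, tsum_shiftFun x])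

/-- The diagonal (componentwise) operator `⊕ᵢ Vᵢ` on an `ℓ²`-direct sum, given a uniform
bound on the `Vᵢ`. -/
def lpDiag {E : ℕ → Type*} [∀ i, NormedAddCommGroup (E i)] [∀ i, NormedSpace ℂ (E i)]
    (V : ∀ i, E i →L[ℂ] E i) (C : ℝ) (hC : 0 ≤ C) (hV : ∀ i (y : E i), ‖V i y‖ ≤ C * ‖y‖) :
    lp E 2 →L[ℂ] lp E 2 :=
  have h2 : (0 : ℝ) < (2 : ℝ≥0∞).toReal := by norm_num
  have key : ∀ x : lp E 2, Summable fun i => ‖V i (x i)‖ ^ (2 : ℝ≥0∞).toReal := by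
    intro x
    refine Summable.of_nonneg_of_le (fun i => Real.rpow_nonneg (norm_nonneg _) _)
      (fun i => ?_) (((lp.memℓp x).summable h2).mul_left (C ^ (2 : ℝ≥0∞).toReal))
    calc ‖V i (x i)‖ ^ (2 : ℝ≥0∞).toReal
        ≤ (C * ‖x i‖) ^ (2 : ℝ≥0∞).toReal :=
          Real.rpow_le_rpow (norm_nonneg _) (hV i (x i)) h2.le
      _ = C ^ (2 : ℝ≥0∞).toReal * ‖x i‖ ^ (2 : ℝ≥0∞).toReal :=
          Real.mul_rpow hC (norm_nonneg _)
  LinearMap.mkContinuous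
    { toFun := fun x => (⟨fun i => V i (x i), memℓp_gen (key x)⟩ : lp E 2)
      map_add' := fun x y => by
        apply Subtype.ext
        funext i
        have h1 : (x + y : lp E 2) i = x i + y i := by rw [lp.coeFn_add]; rfl
        show V i ((x + y : lp E 2) i) = V i (x i) + V i (y i)
        rw [h1, map_add]
      map_smul' := fun c x => by
        apply Subtype.ext
        funext i
        have h1 : (c • x : lp E 2) i = c • x i := by rw [lp.coeFn_smul]; rfl
        show V i ((c • x : lp E 2) i) = c • V i (x i)
        rw [h1, _root_.map_smul] }
    C
    (fun x => by
      show ‖(⟨fun i => V i (x i), memℓp_gen (key x)⟩ : lp E 2)‖ ≤ C * ‖x‖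
      rw [lp.norm_eq_tsum_rpow h2, lp.norm_eq_tsum_rpow h2]
      have hsum := (lp.memℓp x).summable h2
      have hineq : ∑' i, ‖(⟨fun i => V i (x i), memℓp_gen (key x)⟩ : lp E 2) i‖
            ^ (2 : ℝ≥0∞).toReal
          ≤ C ^ (2 : ℝ≥0∞).toReal * ∑' i, ‖x i‖ ^ (2 : ℝ≥0∞).toReal := by
        rw [← tsum_mul_left]
        refine Summable.tsum_le_tsum (fun i => ?_) (key x) (hsum.mul_left _)
        calc ‖V i (x i)‖ ^ (2 : ℝ≥0∞).toReal
            ≤ (C * ‖x i‖) ^ (2 : ℝ≥0∞).toReal :=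
              Real.rpow_le_rpow (norm_nonneg _) (hV i (x i)) h2.le
          _ = C ^ (2 : ℝ≥0∞).toReal * ‖x i‖ ^ (2 : ℝ≥0∞).toReal :=
              Real.mul_rpow hC (norm_nonneg _)
      calc (∑' i, ‖(⟨fun i => V i (x i), memℓp_gen (key x)⟩ : lp E 2) i‖
            ^ (2 : ℝ≥0∞).toReal) ^ (1 / (2 : ℝ≥0∞).toReal)
          ≤ (C ^ (2 : ℝ≥0∞).toReal * ∑' i, ‖x i‖ ^ (2 : ℝ≥0∞).toReal)
              ^ (1 / (2 : ℝ≥0∞).toReal) := by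
            refine Real.rpow_le_rpow ?_ hineq (by positivity)
            exact tsum_nonneg fun i => Real.rpow_nonneg (norm_nonneg _) _
        _ = C * (∑' i, ‖x i‖ ^ (2 : ℝ≥0∞).toReal) ^ (1 / (2 : ℝ≥0∞).toReal) := by
            rw [Real.mul_rpow (Real.rpow_nonneg hC _)
              (tsum_nonneg fun i => Real.rpow_nonneg (norm_nonneg _) _)]
            rw [← Real.rpow_mul hC, mul_one_div_cancel (ne_of_gt h2), Real.rpow_one])


/-- The Hankel-type operator `H_f^u : K_u → L²`, `g ↦ (I - P_u)(f·g)`. -/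
def hankel (u : T2π → ℂ) (hu : IsInner u) (f : T2π → ℂ) (hf : MemLp f ⊤ μ) :
    KuSub u hu →L[ℂ] Ltwo :=
  ((ContinuousLinearMap.id ℂ Ltwo - (KuSub u hu).subtypeL ∘L (KuSub u hu).orthogonalProjectionOnto) ∘L
    mulCLM f hf) ∘L (KuSub u hu).subtypeL

/-- `S ⊕ S*` on `ℓ² ⊕ ℓ²`. -/
def sOplusSstar : WithLp 2 (ellTwo × ellTwo) →L[ℂ] WithLp 2 (ellTwo × ellTwo) :=
  (((WithLp.prodContinuousLinearEquiv 2 ℂ ellTwo ellTwo).symm :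
      (ellTwo × ellTwo) →L[ℂ] WithLp 2 (ellTwo × ellTwo)) ∘L
    (shiftS.prodMap (ContinuousLinearMap.adjoint shiftS))) ∘L
    ((WithLp.prodContinuousLinearEquiv 2 ℂ ellTwo ellTwo) :
      WithLp 2 (ellTwo × ellTwo) →L[ℂ] (ellTwo × ellTwo))

/-- `⊕_{i=1}^∞ (S ⊕ S*)` on the `ℓ²`-direct sum of countably many copies of `ℓ² ⊕ ℓ²`. -/
def bigDirectSum :
    lp (fun _ : ℕ => WithLp 2 (ellTwo × ellTwo)) 2 →L[ℂ]
      lp (fun _ : ℕ => WithLp 2 (ellTwo × ellTwo)) 2 :=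
  lpDiag (fun _ => sOplusSstar) ‖sOplusSstar‖ (norm_nonneg _)
    (fun _ y => ContinuousLinearMap.le_opNorm _ y)



lemma mulCLM_coeFn (φ : T2π → ℂ) (hφ : MemLp φ ⊤ μ) (f : Ltwo) :
    ⇑(mulCLM φ hφ f) =ᵐ[μ] fun θ => φ θ * f θ := by
  simp only [mulCLM, LinearMap.mkContinuous_apply, LinearMap.coe_mk, AddHom.coe_mk]
  filter_upwards [MemLp.coeFn_toLp ((Lp.memLp f).smul (r := 2) hφ)] with θ hθ
  simpa using hθ

lemma mem_H2_iff (x : Ltwo) : x ∈ H2 ↔ ∀ n : ℤ, n < 0 → fourierCoeff (⇑x) n = 0 := by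
  simp only [H2]; rfl


lemma mem_KuSub_iff (u : T2π → ℂ) (hu : IsInner u) (x : Ltwo) :
    x ∈ KuSub u hu ↔ x ∈ H2 ∧
      ∀ y : Ltwo, y ∈ H2 → (inner ℂ x (mulCLM u hu.memLinfty y) : ℂ) = 0 := by
  simp only [KuSub, Submodule.mem_inf, Submodule.mem_orthogonal']
  constructor
  · rintro ⟨h1, h2⟩
    exact ⟨h1, fun y hy => h2 (mulCLM u hu.memLinfty y) ⟨y, hy, rfl⟩⟩
  · rintro ⟨h1, h2⟩
    refine ⟨h1, ?_⟩
    rintro z ⟨y, hy, rfl⟩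
    exact h2 y hy


/-- Fourier monomial in L². -/
abbrev eL (n : ℤ) : Ltwo := fourierLp 2 n

lemma inner_eL (n : ℤ) (x : Ltwo) : (inner ℂ (eL n) x : ℂ) = fourierCoeff (⇑x) n := by
  rw [← fourierBasis_repr, HilbertBasis.repr_apply_apply, coe_fourierBasis]

lemma inner_eL_eL (n m : ℤ) : (inner ℂ (eL n) (eL m) : ℂ) = if n = m then 1 else 0 := by
  have := orthonormal_iff_ite.mp (orthonormal_fourier (T := 2 * Real.pi))
  exact this n m

lemma fourierCoeff_eL (n m : ℤ) : fourierCoeff (⇑(eL n)) m = if m = n then 1 else 0 := by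
  rw [← inner_eL, inner_eL_eL]

lemma inner_L2 (x y : Ltwo) :
    (inner ℂ x y : ℂ) = ∫ θ, conj (x θ) * y θ ∂μ := by
  rw [MeasureTheory.L2.inner_def]
  simp only [RCLike.inner_apply']

lemma fourierCoeff_congr_ae {f g : T2π → ℂ} (h : f =ᵐ[μ] g) (n : ℤ) :
    fourierCoeff f n = fourierCoeff g n := by
  unfold fourierCoeff
  exact integral_congr_ae (h.mono fun θ hθ => by show _ • f θ = _ • g θ; rw [hθ])

lemma inner_eL_mul (m : ℤ) (φ : T2π → ℂ) (hφ : MemLp φ ⊤ μ) (x : Ltwo) :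
    (inner ℂ (eL m) (mulCLM φ hφ x) : ℂ) = fourierCoeff (fun θ => φ θ * x θ) m := by
  rw [inner_L2]
  unfold fourierCoeff
  apply integral_congr_ae
  filter_upwards [coeFn_fourierLp (T := 2 * Real.pi) 2 m, mulCLM_coeFn φ hφ x] with θ h1 h2
  show conj ((eL m) θ) * (mulCLM φ hφ x) θ = fourier (-m) θ • (φ θ * x θ)
  rw [h1, h2, smul_eq_mul, fourier_neg]

lemma fourierCoeff_mul_fourier (n m : ℤ) (g : T2π → ℂ) :
    fourierCoeff (fun θ => fourier n θ * g θ) m = fourierCoeff g (m - n) := by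
  unfold fourierCoeff
  apply integral_congr_ae
  refine Filter.Eventually.of_forall fun θ => ?_
  show fourier (-m) θ • (fourier n θ * g θ) = fourier (-(m - n)) θ • g θ
  rw [smul_eq_mul, smul_eq_mul, ← mul_assoc, ← fourier_add, neg_sub, sub_eq_neg_add]

lemma inner_eL_mul_fourier (m n : ℤ) (h : MemLp (⇑(fourier n : C(T2π, ℂ))) ⊤ μ) (x : Ltwo) :
    (inner ℂ (eL m) (mulCLM (⇑(fourier n : C(T2π, ℂ))) h x) : ℂ) = (inner ℂ (eL (m - n)) x : ℂ) := by
  rw [inner_eL_mul, inner_eL, fourierCoeff_mul_fourier]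

lemma inner_eL_ue (m k : ℤ) {u : T2π → ℂ} (hu : MemLp u ⊤ μ) :
    (inner ℂ (eL m) (mulCLM u hu (eL k)) : ℂ) = fourierCoeff u (m - k) := by
  rw [inner_eL_mul]
  have h1 : fourierCoeff (fun θ => u θ * (eL k) θ) m
      = fourierCoeff (fun θ => fourier k θ * u θ) m := by
    apply fourierCoeff_congr_ae
    filter_upwards [coeFn_fourierLp (T := 2 * Real.pi) 2 k] with θ hθ
    show u θ * (eL k) θ = _
    rw [hθ, mul_comm]
  rw [h1, fourierCoeff_mul_fourier]

lemma eL_mem_H2 {n : ℤ} (hn : 0 ≤ n) : (eL n) ∈ H2 := by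
  rw [mem_H2_iff]
  intro m hm
  rw [fourierCoeff_eL, if_neg (by omega)]

lemma inner_ue_ue {u : T2π → ℂ} (hu : IsInner u) (k m : ℤ) :
    (inner ℂ (mulCLM u hu.memLinfty (eL k)) (mulCLM u hu.memLinfty (eL m)) : ℂ)
      = if k = m then 1 else 0 := by
  rw [← inner_eL_eL k m, inner_L2, inner_L2]
  apply integral_congr_ae
  filter_upwards [mulCLM_coeFn u hu.memLinfty (eL k), mulCLM_coeFn u hu.memLinfty (eL m),
    hu.unimodular] with θ h1 h2 h3
  rw [h1, h2]
  have : conj (u θ) * u θ = 1 := by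
    rw [mul_comm, Complex.mul_conj, Complex.normSq_eq_norm_sq, h3]
    norm_num
  calc conj (u θ * (eL k) θ) * (u θ * (eL m) θ)
      = (conj (u θ) * u θ) * (conj ((eL k) θ) * (eL m) θ) := by ring_nf; rw [map_mul]; ring
    _ = conj ((eL k) θ) * (eL m) θ := by rw [this, one_mul]

lemma inner_ue_mul_fourier {u : T2π → ℂ} (hu : IsInner u) (i n : ℤ)
    (h : MemLp (⇑(fourier n : C(T2π, ℂ))) ⊤ μ) (x : Ltwo) :
    (inner ℂ (mulCLM u hu.memLinfty (eL i)) (mulCLM (⇑(fourier n : C(T2π, ℂ))) h x) : ℂ)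
      = (inner ℂ (mulCLM u hu.memLinfty (eL (i - n))) x : ℂ) := by
  rw [inner_L2, inner_L2]
  apply integral_congr_ae
  filter_upwards [mulCLM_coeFn u hu.memLinfty (eL i), mulCLM_coeFn u hu.memLinfty (eL (i - n)),
    mulCLM_coeFn (⇑(fourier n : C(T2π, ℂ))) h x, coeFn_fourierLp (T := 2 * Real.pi) 2 i,
    coeFn_fourierLp (T := 2 * Real.pi) 2 (i - n)] with θ h1 h2 h3 h4 h5
  rw [h1, h2, h3, h4, h5]
  have hc : ∀ m : ℤ, (conj (fourier m θ) : ℂ) = fourier (-m) θ := fun m => fourier_neg.symm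
  rw [map_mul, map_mul, hc i, hc (i - n)]
  have key : (fourier (-i) θ : ℂ) * fourier n θ = fourier (-(i - n)) θ := by
    rw [← fourier_add, neg_sub, sub_eq_neg_add]
  rw [← key]; ring

lemma clm_eq_zero_of_H2 (x : Ltwo) (hx : x ∈ H2) (L : Ltwo →L[ℂ] ℂ)
    (h0 : ∀ n : ℤ, 0 ≤ n → L (eL n) = 0) : L x = 0 := by
  have hs : HasSum (fun i : ℤ => fourierCoeff (⇑x) i • eL i) x := hasSum_fourier_series_L2 x
  have hmap := hs.mapL L
  have hzero : (fun i : ℤ => L (fourierCoeff (⇑x) i • eL i)) = fun _ => 0 := by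
    funext i
    rcases lt_or_ge i 0 with hi | hi
    · rw [(mem_H2_iff x).mp hx i hi, zero_smul, map_zero]
    · rw [_root_.map_smul, h0 i hi, smul_zero]
  rw [hzero] at hmap
  simpa using hmap.unique hasSum_zero

lemma inner_KuSub_ue {u : T2π → ℂ} {hu : IsInner u} (x : Ltwo) (hx : x ∈ KuSub u hu)
    {k : ℤ} (hk : 0 ≤ k) : (inner ℂ x (mulCLM u hu.memLinfty (eL k)) : ℂ) = 0 :=
  ((mem_KuSub_iff u hu x).mp hx).2 (eL k) (eL_mem_H2 hk)

lemma mem_KuSub_of (u : T2π → ℂ) (hu : IsInner u) (y : Ltwo)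
    (h1 : ∀ m : ℤ, m < 0 → (inner ℂ (eL m) y : ℂ) = 0)
    (h2 : ∀ k : ℤ, 0 ≤ k → (inner ℂ y (mulCLM u hu.memLinfty (eL k)) : ℂ) = 0) :
    y ∈ KuSub u hu := by
  rw [mem_KuSub_iff]
  constructor
  · rw [mem_H2_iff]
    intro n hn
    rw [← inner_eL]
    exact h1 n hn
  · intro w hw
    exact clm_eq_zero_of_H2 w hw ((innerSL ℂ y).comp (mulCLM u hu.memLinfty)) h2

lemma sub_orthProj_mem_span (u : T2π → ℂ) (hu : IsInner u) (h : Ltwo) {ι : Type} (s : Finset ι)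
    (v : ι → Ltwo) (hv : ∀ k ∈ s, v k ∈ (KuSub u hu)ᗮ)
    (hy : h - ∑ k ∈ s, (inner ℂ (v k) h : ℂ) • v k ∈ KuSub u hu) :
    h - (((KuSub u hu).orthogonalProjectionOnto h : KuSub u hu) : Ltwo) ∈
      Submodule.span ℂ (v '' ↑s) := by
  have horth : h - (h - ∑ k ∈ s, (inner ℂ (v k) h : ℂ) • v k) ∈ (KuSub u hu)ᗮ := by
    rw [sub_sub_cancel]
    exact Submodule.sum_mem _ fun k hk => Submodule.smul_mem _ _ (hv k hk)
  have hproj : ((KuSub u hu).orthogonalProjectionOnto h : Ltwo) = h - ∑ k ∈ s, (inner ℂ (v k) h : ℂ) • v k := by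
    rw [← Submodule.starProjection_apply]
    exact (KuSub u hu).eq_starProjection_of_mem_orthogonal hy horth
  rw [hproj, sub_sub_cancel]
  exact Submodule.sum_mem _ fun k hk =>
    Submodule.smul_mem _ _ (Submodule.subset_span ⟨k, hk, rfl⟩)

lemma isCompactOperator_of_mem_span {X : Type*} [NormedAddCommGroup X] [NormedSpace ℂ X]
    (T : X →L[ℂ] Ltwo) (W : Submodule ℂ Ltwo) (hW : FiniteDimensional ℂ W)
    (hT : ∀ x, T x ∈ W) : IsCompactOperator ⇑T := by
  haveI : ProperSpace W := FiniteDimensional.proper ℂ W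
  refine ⟨(W.subtype) '' Metric.closedBall 0 (‖T‖ + 1), ?_, ?_⟩
  · exact (isCompact_closedBall (0 : W) (‖T‖ + 1)).image continuous_subtype_val
  · refine Filter.mem_of_superset (Metric.ball_mem_nhds 0 one_pos) ?_
    intro x hx
    refine ⟨⟨T x, hT x⟩, ?_, rfl⟩
    rw [Metric.mem_closedBall, dist_zero_right]
    have h1 : ‖(⟨T x, hT x⟩ : W)‖ = ‖T x‖ := rfl
    have h2 : ‖T x‖ ≤ ‖T‖ * ‖x‖ := T.le_opNorm x
    have h3 : ‖x‖ < 1 := by simpa [dist_zero_right] using hx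
    have h4 : (0:ℝ) ≤ ‖T‖ := norm_nonneg _
    rw [h1]
    nlinarith [norm_nonneg x]

lemma hankel_apply_eq (u : T2π → ℂ) (hu : IsInner u) (f : T2π → ℂ) (hf : MemLp f ⊤ μ)
    (g : KuSub u hu) :
    (hankel u hu f hf) g = mulCLM f hf (g : Ltwo)
      - (((KuSub u hu).orthogonalProjectionOnto (mulCLM f hf (g : Ltwo)) : KuSub u hu) : Ltwo) :=
  rfl

lemma hankel_fourier_mem_span_pos (u : T2π → ℂ) (hu : IsInner u) (n : ℤ) (hn : 0 ≤ n)
    (hfn : MemLp (⇑(fourier n : C(T2π, ℂ))) ⊤ μ) (g : KuSub u hu) :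
    (hankel u hu (⇑(fourier n : C(T2π, ℂ))) hfn) g ∈
      Submodule.span ℂ ((fun k => mulCLM u hu.memLinfty (eL k)) '' ↑(Finset.Ico (0:ℤ) n)) := by
  set v : ℤ → Ltwo := fun k => mulCLM u hu.memLinfty (eL k) with hv'
  set h : Ltwo := mulCLM (⇑(fourier n : C(T2π, ℂ))) hfn ((g : Ltwo)) with hh
  rw [hankel_apply_eq]
  have hgK : (g : Ltwo) ∈ KuSub u hu := g.2
  have hgH2 : (g : Ltwo) ∈ H2 := ((mem_KuSub_iff u hu _).mp hgK).1
  refine sub_orthProj_mem_span u hu h (Finset.Ico (0:ℤ) n) v (fun k hk => ?_) ?_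
  · -- v k ∈ (KuSub)ᗮ
    rw [Submodule.mem_orthogonal]
    intro x hx
    exact inner_KuSub_ue x hx (Finset.mem_Ico.mp hk).1
  · refine mem_KuSub_of u hu _ (fun m hm => ?_) (fun i hi => ?_)
    · rw [inner_sub_right, inner_sum]
      have e1 : (inner ℂ (eL m) h : ℂ) = 0 := by
        rw [hh, inner_eL_mul_fourier, inner_eL]
        exact (mem_H2_iff _).mp hgH2 (m - n) (by omega)
      have e2 : ∀ k ∈ Finset.Ico (0:ℤ) n,
          (inner ℂ (eL m) ((inner ℂ (v k) h : ℂ) • v k) : ℂ) = 0 := by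
        intro k hk
        rw [inner_smul_right, hv']
        have : (inner ℂ (eL m) (mulCLM u hu.memLinfty (eL k)) : ℂ) = 0 := by
          rw [inner_eL_ue]
          exact hu.negCoeff (m - k) (by have := (Finset.mem_Ico.mp hk).1; omega)
        rw [this, mul_zero]
      rw [e1, Finset.sum_congr rfl e2, Finset.sum_const_zero, sub_zero]
    · rw [inner_sub_left, sum_inner]
      have e3 : ∀ k, (inner ℂ (v k) (v i) : ℂ) = if k = i then 1 else 0 := fun k =>
        inner_ue_ue hu k i
      have e4 : ∀ k ∈ Finset.Ico (0:ℤ) n,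
          (inner ℂ ((inner ℂ (v k) h : ℂ) • v k) (v i) : ℂ)
            = if k = i then conj (inner ℂ (v i) h : ℂ) else 0 := by
        intro k hk
        rw [inner_smul_left, e3 k]
        by_cases hki : k = i
        · rw [if_pos hki, if_pos hki, hki, mul_one]
        · rw [if_neg hki, if_neg hki, mul_zero]
      rw [Finset.sum_congr rfl e4, Finset.sum_ite_eq' (Finset.Ico (0:ℤ) n) i
        (fun _ => conj (inner ℂ (v i) h : ℂ))]
      have e5 : (inner ℂ h (v i) : ℂ) = conj (inner ℂ (v i) h : ℂ) := (inner_conj_symm _ _).symm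
      by_cases hin : i < n
      · rw [if_pos (Finset.mem_Ico.mpr ⟨hi, hin⟩), e5, sub_self]
      · rw [if_neg (fun hmem => hin (Finset.mem_Ico.mp hmem).2), sub_zero, e5]
        have : (inner ℂ (v i) h : ℂ) = 0 := by
          rw [hh, hv', inner_ue_mul_fourier hu]
          rw [← inner_conj_symm]
          rw [inner_KuSub_ue _ hgK (by omega : (0:ℤ) ≤ i - n), map_zero]
        rw [this, map_zero]

lemma hankel_fourier_mem_span_neg (u : T2π → ℂ) (hu : IsInner u) (n : ℤ) (hn : n < 0)
    (hfn : MemLp (⇑(fourier n : C(T2π, ℂ))) ⊤ μ) (g : KuSub u hu) :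
    (hankel u hu (⇑(fourier n : C(T2π, ℂ))) hfn) g ∈
      Submodule.span ℂ (eL '' ↑(Finset.Ico n (0:ℤ))) := by
  set h : Ltwo := mulCLM (⇑(fourier n : C(T2π, ℂ))) hfn ((g : Ltwo)) with hh
  rw [hankel_apply_eq]
  have hgK : (g : Ltwo) ∈ KuSub u hu := g.2
  have hgH2 : (g : Ltwo) ∈ H2 := ((mem_KuSub_iff u hu _).mp hgK).1
  refine sub_orthProj_mem_span u hu h (Finset.Ico n (0:ℤ)) eL (fun k hk => ?_) ?_
  · rw [Submodule.mem_orthogonal]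
    intro x hx
    have hxH2 : x ∈ H2 := ((mem_KuSub_iff u hu _).mp hx).1
    rw [← inner_conj_symm, inner_eL, (mem_H2_iff _).mp hxH2 k (Finset.mem_Ico.mp hk).2, map_zero]
  · refine mem_KuSub_of u hu _ (fun m hm => ?_) (fun i hi => ?_)
    · rw [inner_sub_right, inner_sum]
      have e4 : ∀ k ∈ Finset.Ico n (0:ℤ),
          (inner ℂ (eL m) ((inner ℂ (eL k) h : ℂ) • eL k) : ℂ)
            = if k = m then (inner ℂ (eL m) h : ℂ) else 0 := by
        intro k hk
        rw [inner_smul_right, inner_eL_eL]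
        by_cases hkm : k = m
        · rw [if_pos ((eq_comm).mpr hkm), if_pos hkm, hkm, mul_one]
        · rw [if_neg (fun hmk => hkm (hmk.symm)), if_neg hkm, mul_zero]
      rw [Finset.sum_congr rfl e4, Finset.sum_ite_eq' (Finset.Ico n (0:ℤ)) m
        (fun _ => (inner ℂ (eL m) h : ℂ))]
      by_cases hmn : n ≤ m
      · rw [if_pos (Finset.mem_Ico.mpr ⟨hmn, hm⟩), sub_self]
      · rw [if_neg (fun hmem => hmn (Finset.mem_Ico.mp hmem).1), sub_zero, hh,
          inner_eL_mul_fourier, inner_eL]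
        exact (mem_H2_iff _).mp hgH2 (m - n) (by omega)
    · rw [inner_sub_left, sum_inner]
      have e1 : (inner ℂ h (mulCLM u hu.memLinfty (eL i)) : ℂ) = 0 := by
        rw [← inner_conj_symm, hh, inner_ue_mul_fourier hu, ← inner_conj_symm,
          inner_KuSub_ue _ hgK (by omega : (0:ℤ) ≤ i - n), map_zero, map_zero]
      have e2 : ∀ k ∈ Finset.Ico n (0:ℤ),
          (inner ℂ ((inner ℂ (eL k) h : ℂ) • eL k) (mulCLM u hu.memLinfty (eL i)) : ℂ) = 0 := by
        intro k hk
        rw [inner_smul_left]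
        have : (inner ℂ (eL k) (mulCLM u hu.memLinfty (eL i)) : ℂ) = 0 := by
          rw [inner_eL_ue]
          exact hu.negCoeff (k - i) (by have := (Finset.mem_Ico.mp hk).2; omega)
        rw [this, mul_zero]
      rw [e1, Finset.sum_congr rfl e2, Finset.sum_const_zero, sub_zero]

lemma mulCLM_add_symbol (φ ψ : T2π → ℂ) (hφ : MemLp φ ⊤ μ) (hψ : MemLp ψ ⊤ μ)
    (h : MemLp (fun θ => φ θ + ψ θ) ⊤ μ) :
    mulCLM (fun θ => φ θ + ψ θ) h = mulCLM φ hφ + mulCLM ψ hψ := by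
  ext y
  filter_upwards [mulCLM_coeFn (fun θ => φ θ + ψ θ) h y, mulCLM_coeFn φ hφ y,
    mulCLM_coeFn ψ hψ y, Lp.coeFn_add (mulCLM φ hφ y) (mulCLM ψ hψ y)] with θ h1 h2 h3 h4
  simp only [ContinuousLinearMap.add_apply]
  rw [h1, h4, Pi.add_apply, h2, h3, add_mul]

lemma mulCLM_smul_symbol (c : ℂ) (φ : T2π → ℂ) (hφ : MemLp φ ⊤ μ)
    (h : MemLp (fun θ => c * φ θ) ⊤ μ) :
    mulCLM (fun θ => c * φ θ) h = c • mulCLM φ hφ := by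
  ext y
  filter_upwards [mulCLM_coeFn (fun θ => c * φ θ) h y, mulCLM_coeFn φ hφ y,
    Lp.coeFn_smul c (mulCLM φ hφ y)] with θ h1 h2 h3
  simp only [ContinuousLinearMap.smul_apply]
  rw [h1, h3, Pi.smul_apply, h2, smul_eq_mul, mul_assoc]

lemma hankel_add_symbol (u : T2π → ℂ) (hu : IsInner u) (φ ψ : T2π → ℂ)
    (hφ : MemLp φ ⊤ μ) (hψ : MemLp ψ ⊤ μ) (h : MemLp (fun θ => φ θ + ψ θ) ⊤ μ) :
    hankel u hu (fun θ => φ θ + ψ θ) h = hankel u hu φ hφ + hankel u hu ψ hψ := by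
  unfold hankel
  rw [mulCLM_add_symbol φ ψ hφ hψ h, ContinuousLinearMap.comp_add,
    ContinuousLinearMap.add_comp]

lemma hankel_smul_symbol (u : T2π → ℂ) (hu : IsInner u) (c : ℂ) (φ : T2π → ℂ)
    (hφ : MemLp φ ⊤ μ) (h : MemLp (fun θ => c * φ θ) ⊤ μ) :
    hankel u hu (fun θ => c * φ θ) h = c • hankel u hu φ hφ := by
  unfold hankel
  rw [mulCLM_smul_symbol c φ hφ h, ContinuousLinearMap.comp_smul,
    ContinuousLinearMap.smul_comp]

lemma norm_mulCLM_apply_le (f : C(T2π, ℂ)) (y : Ltwo) :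
    ‖mulCLM (⇑f) (memLinfty_contMap f) y‖ ≤ ‖f‖ * ‖y‖ := by
  have hcoe := mulCLM_coeFn (⇑f) (memLinfty_contMap f) y
  rw [Lp.norm_def, eLpNorm_congr_ae hcoe]
  have hb : eLpNorm (⇑f) ⊤ μ ≤ ENNReal.ofReal ‖f‖ := by
    rw [eLpNorm_exponent_top]
    exact eLpNormEssSup_le_of_ae_bound
      (Filter.Eventually.of_forall fun θ => f.norm_coe_le_norm θ)
  have hs : eLpNorm (fun θ => f θ * y θ) 2 μ ≤ eLpNorm (⇑f) ⊤ μ * eLpNorm (⇑y) 2 μ := by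
    have h1 := eLpNorm_smul_le_eLpNorm_top_mul_eLpNorm 2 (Lp.aestronglyMeasurable y) (⇑f)
    have h2 : (⇑f • ⇑y : T2π → ℂ) = fun θ => f θ * y θ := by
      funext θ; simp [Pi.smul_apply', smul_eq_mul]
    rwa [h2] at h1
  calc (eLpNorm (fun θ => f θ * y θ) 2 μ).toReal
      ≤ (ENNReal.ofReal ‖f‖ * eLpNorm (⇑y) 2 μ).toReal :=
        ENNReal.toReal_mono (ENNReal.mul_ne_top ENNReal.ofReal_ne_top (Lp.eLpNorm_ne_top y))
          (hs.trans (mul_le_mul_left hb _))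
    _ = ‖f‖ * ‖y‖ := by
        rw [ENNReal.toReal_mul, ENNReal.toReal_ofReal (norm_nonneg f), Lp.norm_def]

lemma norm_hankel_le (u : T2π → ℂ) (hu : IsInner u) (f : C(T2π, ℂ)) :
    ‖hankel u hu (⇑f) (memLinfty_contMap f)‖ ≤ 2 * ‖f‖ := by
  refine ContinuousLinearMap.opNorm_le_bound _ (by positivity) fun g => ?_
  rw [hankel_apply_eq]
  set h := mulCLM (⇑f) (memLinfty_contMap f) ((g : Ltwo)) with hh
  have hP : ‖(((KuSub u hu).orthogonalProjectionOnto h : KuSub u hu) : Ltwo)‖ ≤ ‖h‖ := by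
    have h1 := ((KuSub u hu).orthogonalProjectionOnto).le_opNorm h
    have h2 := (KuSub u hu).orthogonalProjectionOnto_norm_le
    have h3 : ‖(((KuSub u hu).orthogonalProjectionOnto h : KuSub u hu) : Ltwo)‖
        = ‖(KuSub u hu).orthogonalProjectionOnto h‖ := rfl
    rw [h3]
    nlinarith [norm_nonneg h]
  have hmf : ‖h‖ ≤ ‖f‖ * ‖(g : Ltwo)‖ := norm_mulCLM_apply_le f _
  have hgn : ‖(g : Ltwo)‖ = ‖g‖ := rfl
  calc ‖h - (((KuSub u hu).orthogonalProjectionOnto h : KuSub u hu) : Ltwo)‖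
      ≤ ‖h‖ + ‖(((KuSub u hu).orthogonalProjectionOnto h : KuSub u hu) : Ltwo)‖ := norm_sub_le _ _
    _ ≤ 2 * ‖f‖ * ‖g‖ := by rw [← hgn]; nlinarith [norm_nonneg (g : Ltwo), norm_nonneg f]

/-- The Hankel operator, as a continuous linear map in the (continuous) symbol. -/
def hankelCLM (u : T2π → ℂ) (hu : IsInner u) : C(T2π, ℂ) →L[ℂ] (KuSub u hu →L[ℂ] Ltwo) :=
  LinearMap.mkContinuous
    { toFun := fun f => hankel u hu (⇑f) (memLinfty_contMap f)
      map_add' := fun f g =>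
        hankel_add_symbol u hu (⇑f) (⇑g) (memLinfty_contMap f) (memLinfty_contMap g)
          (memLinfty_contMap (f + g))
      map_smul' := fun c f =>
        hankel_smul_symbol u hu c (⇑f) (memLinfty_contMap f) (memLinfty_contMap (c • f)) }
    2 (fun f => norm_hankel_le u hu f)

lemma hankelCLM_apply (u : T2π → ℂ) (hu : IsInner u) (f : C(T2π, ℂ)) :
    hankelCLM u hu f = hankel u hu (⇑f) (memLinfty_contMap f) := rfl

lemma hankel_fourier_compact (u : T2π → ℂ) (hu : IsInner u) (n : ℤ) :
    IsCompactOperator ⇑(hankelCLM u hu (fourier n)) := by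
  rw [hankelCLM_apply]
  rcases le_or_gt 0 n with hn | hn
  · exact isCompactOperator_of_mem_span _ _
      (FiniteDimensional.span_of_finite ℂ
        ((Finset.Ico (0:ℤ) n).finite_toSet.image (fun k => mulCLM u hu.memLinfty (eL k))))
      (fun g => hankel_fourier_mem_span_pos u hu n hn _ g)
  · exact isCompactOperator_of_mem_span _ _
      (FiniteDimensional.span_of_finite ℂ ((Finset.Ico n (0:ℤ)).finite_toSet.image eL))
      (fun g => hankel_fourier_mem_span_neg u hu n hn _ g)

theorem hankel_compact_of_continuous' (u : T2π → ℂ) (hu : IsInner u) (f : C(T2π, ℂ)) :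
    IsCompactOperator ⇑(hankel u hu ⇑f (memLinfty_contMap f)) := by
  rw [← hankelCLM_apply]
  have hS : IsClosed {T : KuSub u hu →L[ℂ] Ltwo | IsCompactOperator ⇑T} :=
    isClosed_setOf_isCompactOperator
  have hpre : IsClosed ((hankelCLM u hu) ⁻¹' {T | IsCompactOperator ⇑T}) :=
    hS.preimage (hankelCLM u hu).continuous
  have hspan : (Submodule.span ℂ (Set.range (fourier (T := 2 * Real.pi))) : Set C(T2π, ℂ)) ⊆
      (hankelCLM u hu) ⁻¹' {T | IsCompactOperator ⇑T} := by
    intro p hp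
    induction hp using Submodule.span_induction with
    | mem x hx =>
      obtain ⟨n, rfl⟩ := hx
      exact hankel_fourier_compact u hu n
    | zero =>
      show IsCompactOperator ⇑(hankelCLM u hu 0)
      rw [ContinuousLinearMap.map_zero]
      exact isCompactOperator_zero
    | add x y hx hy hx' hy' =>
      show IsCompactOperator ⇑(hankelCLM u hu (x + y))
      rw [ContinuousLinearMap.map_add]
      exact hx'.add hy'
    | smul c x hx hx' =>
      show IsCompactOperator ⇑(hankelCLM u hu (c • x))
      rw [ContinuousLinearMap.map_smul]
      exact hx'.smul c
  have hcl : (closure (Submodule.span ℂ (Set.range (fourier (T := 2 * Real.pi))) :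
      Set C(T2π, ℂ))) ⊆ (hankelCLM u hu) ⁻¹' {T | IsCompactOperator ⇑T} :=
    closure_minimal hspan hpre
  have hf : f ∈ closure (Submodule.span ℂ (Set.range (fourier (T := 2 * Real.pi))) :
      Set C(T2π, ℂ)) := by
    have := span_fourier_closure_eq_top (T := 2 * Real.pi)
    have hmem : f ∈ ((Submodule.span ℂ
        (Set.range (fourier (T := 2 * Real.pi)))).topologicalClosure : Set C(T2π, ℂ)) := by
      rw [this]; trivial
    exact hmem
  exact hcl hf

/-- For a continuous symbol `f`, the Hankel-type operator
`H_f^u : K_u → L²` is compact. -/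
theorem hankel_compact_of_continuous (u : T2π → ℂ) (hu : IsInner u) (f : C(T2π, ℂ)) :
    IsCompactOperator ⇑(hankel u hu ⇑f (memLinfty_contMap f)) :=
  hankel_compact_of_continuous' u hu f

end TTOPaper
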